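/- Let α ∈ [0,1) and c > 0, so c_α = c^{1−α}/(α−1) < 0, and let L be the virtual SIGTRON-induced loss function for this case: L(x) = c_α·F(1 + x/c_α; 1−α) − c_α − x for x ≤ −c_α and L(x) = 0 for x > −c_α. Then L(x) ≥ 0 for all x ∈ ℝ, and L(x) = 0 if and only if x ≥ −c_α; in particular L(x) > 0 for every x < −c_α. -/

import Mathlib

/-- `c_α = c^{1−α}/(α−1)` (real power). -/
noncomputable def cA (α c : ℝ) : ℝ := c ^ (1 - α) / (α - 1)

/-- `F(z;b) = ∫₀^z 1/(1 + t^{1/b}) dt`. -/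
noncomputable def Fint (z b : ℝ) : ℝ := ∫ t in (0 : ℝ)..z, 1 / (1 + t ^ ((1 : ℝ) / b))

/-- Virtual SIGTRON-induced loss for `α ∈ [0,1)`:
`L(x) = c_α·F(1+x/c_α; 1−α) − c_α − x` for `x ≤ −c_α`, and `L(x) = 0` otherwise. -/
noncomputable def lossLT (α c : ℝ) (x : ℝ) : ℝ :=
  if x ≤ -(cA α c) then cA α c * Fint (1 + x / cA α c) (1 - α) - cA α c - x else 0

lemma sig_contOn (p z : ℝ) (hp : 0 < p) (hz : 0 ≤ z) :
    ContinuousOn (fun t : ℝ => 1 / (1 + t ^ p)) (Set.uIcc 0 z) := by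
  rw [Set.uIcc_of_le hz]
  have hcont : Continuous fun t : ℝ => t ^ p := by
    rw [continuous_iff_continuousAt]
    exact fun x => Real.continuousAt_rpow_const x p (Or.inr hp.le)
  apply ContinuousOn.div continuousOn_const (Continuous.continuousOn (by continuity))
  intro t ht
  have : (0:ℝ) ≤ t ^ p := Real.rpow_nonneg ht.1 p
  positivity

lemma Fint_lt (z b : ℝ) (hz : 0 < z) (hb : 0 < b) : Fint z b < z := by
  set p : ℝ := 1 / b with hp
  have hppos : 0 < p := by positivity
  have hg : IntervalIntegrable (fun t : ℝ => 1 / (1 + t ^ p)) MeasureTheory.volume 0 z :=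
    (sig_contOn p z hppos hz.le).intervalIntegrable
  have hsub : (∫ t in (0:ℝ)..z, (1 - 1 / (1 + t ^ p))) = z - Fint z b := by
    rw [intervalIntegral.integral_sub intervalIntegrable_const hg]
    simp [Fint, hp]
  have hpos : 0 < ∫ t in (0:ℝ)..z, (1 - 1 / (1 + t ^ p)) := by
    apply intervalIntegral.intervalIntegral_pos_of_pos_on
      (intervalIntegrable_const.sub hg)
    · intro t ht
      have htp : 0 < t ^ p := Real.rpow_pos_of_pos ht.1 p
      have : 1 / (1 + t ^ p) < 1 := by
        rw [div_lt_one (by linarith)]; linarith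
      linarith
    · exact hz
  linarith [hsub ▸ hpos]

theorem sigtron_stmt14 (α c : ℝ) (hα : α ∈ Set.Ico (0 : ℝ) 1) (hc : 0 < c) :
    (∀ x, 0 ≤ lossLT α c x) ∧
    (∀ x, lossLT α c x = 0 ↔ -(cA α c) ≤ x) ∧
    (∀ x, x < -(cA α c) → 0 < lossLT α c x) := by
  obtain ⟨hα0, hα1⟩ := hα
  have ha : cA α c < 0 :=
    div_neg_of_pos_of_neg (Real.rpow_pos_of_pos hc _) (by linarith)
  set a := cA α c with hadef
  have hane : a ≠ 0 := ne_of_lt ha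
  have hb : (0:ℝ) < 1 - α := by linarith
  have key : ∀ x, x ≤ -a →
      lossLT α c x = a * (Fint (1 + x / a) (1 - α) - (1 + x / a)) := by
    intro x hx
    have haz : a * (1 + x / a) = a + x := by field_simp
    simp only [lossLT, ← hadef, if_pos hx, mul_sub, haz]
    ring
  have pos : ∀ x, x < -a → 0 < lossLT α c x := by
    intro x hx
    have hz : 0 < 1 + x / a := by
      have : -1 < x / a := by
        rw [lt_div_iff_of_neg ha]; linarith
      linarith
    rw [key x hx.le]
    have hF := Fint_lt (1 + x / a) (1 - α) hz hb
    exact mul_pos_of_neg_of_neg ha (by linarith)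
  have zero_of_ge : ∀ x, -a ≤ x → lossLT α c x = 0 := by
    intro x hx
    rcases eq_or_lt_of_le hx with rfl | hlt
    · rw [key (-a) le_rfl]
      have : 1 + -a / a = 0 := by field_simp; norm_num
      rw [this]
      simp [Fint]
    · simp [lossLT, ← hadef, not_le.2 hlt]
  refine ⟨fun x => ?_, fun x => ⟨fun h => ?_, zero_of_ge x⟩, pos⟩
  · rcases lt_or_ge x (-a) with hx | hx
    · exact (pos x hx).le
    · exact (zero_of_ge x hx).ge
  · by_contra hcon
    exact absurd h (ne_of_gt (pos x (not_le.1 hcon)))
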